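/- Let n ≥ 1 and let S : ℝ → ℝ satisfy 0 < S(x) ≤ 1 for all x. Let g : ℝ → ℝ satisfy 0 < g(t) < 1 for every t > 0, g antitone and convex on (0,∞). Let v, u, α, β : Fin n → ℝ be positive nondecreasing tuples such that for every k = 1,…,n: Σ_{i=1}^k α i ≤ Σ_{i=1}^k β i and Σ_{i=1}^k v i ≤ Σ_{i=1}^k u i. Let q₁, q₂ : {1,…,n} → ℝ be nonnegative with Σ_{m=1}^n q₁(m) = Σ_{m=1}^n q₂(m) = 1 and Σ_{m=k}^n q₂(m) ≤ Σ_{m=k}^n q₁(m) for every k. Then for every x ∈ ℝ: Σ_{m=1}^n q₁(m) · ∏_{i=1}^m (1 − g(v i)·S(x)^{α i}) ≤ Σ_{m=1}^n q₂(m) · ∏_{i=1}^m (1 − g(u i)·S(x)^{β i}). -/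

import Mathlib

open Finset

/-- Sum of the first `k` entries of the tuple `a`. -/
noncomputable def prefixSum {n : ℕ} (a : Fin n → ℝ) (k : ℕ) : ℝ :=
  ∑ i ∈ Finset.univ.filter (fun i : Fin n => (i : ℕ) < k), a i

/-- Product of the first `m` entries of the tuple `c`. -/
noncomputable def prefixProd {n : ℕ} (c : Fin n → ℝ) (m : ℕ) : ℝ :=
  ∏ i ∈ Finset.univ.filter (fun i : Fin n => (i : ℕ) < m), c i

lemma slope_symm (x y a b : ℝ) : (x - y) / (a - b) = (y - x) / (b - a) := by
  rw [← neg_sub y, ← neg_sub b, neg_div_neg_eq]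

/-- Abel summation positivity. -/
lemma abel_nonneg (N : ℕ) (lam d : ℕ → ℝ) (hanti : Antitone lam)
    (hpos : ∀ i, 0 ≤ lam i) (hD : ∀ k ≤ N, 0 ≤ ∑ i ∈ range k, d i) :
    0 ≤ ∑ i ∈ range N, lam i * d i := by
  induction N generalizing lam with
  | zero => simp
  | succ N ih =>
    have h1 : 0 ≤ ∑ i ∈ range N, (fun i => lam (min i N) - lam N) i * d i := by
      refine ih (fun i => lam (min i N) - lam N) ?_ ?_ (fun k hk => hD k (by omega))
      · intro i j hij
        simp only
        have := hanti (min_le_min_right N hij)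
        linarith
      · intro i; simp only [sub_nonneg]; exact hanti (min_le_right i N)
    have h2 : ∑ i ∈ range N, (fun i => lam (min i N) - lam N) i * d i
        = ∑ i ∈ range N, lam i * d i - lam N * ∑ i ∈ range N, d i := by
      rw [mul_sum, ← sum_sub_distrib]
      refine sum_congr rfl fun i hi => ?_
      simp only [mem_range] at hi
      simp only [min_eq_left hi.le]; ring
    have h3 : 0 ≤ lam N * ∑ i ∈ range (N + 1), d i :=
      mul_nonneg (hpos N) (hD _ le_rfl)
    rw [sum_range_succ] at h3 ⊢
    rw [h2] at h1
    nlinarith [mul_add (lam N) (∑ i ∈ range N, d i) (d N)]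

/-- secant through a fixed point of a concave function is antitone. -/
lemma concave_secant_anti {f : ℝ → ℝ} {s : Set ℝ} (hf : ConcaveOn ℝ s f) {a x y : ℝ}
    (ha : a ∈ s) (hx : x ∈ s) (hy : y ∈ s) (hxa : x ≠ a) (hya : y ≠ a) (hxy : x ≤ y) :
    (f y - f a) / (y - a) ≤ (f x - f a) / (x - a) := by
  have := hf.neg.secant_mono ha hx hy hxa hya hxy
  simp only [Pi.neg_apply] at this
  have e1 : (-f x - -f a) / (x - a) = -((f x - f a) / (x - a)) := by ring
  have e2 : (-f y - -f a) / (y - a) = -((f y - f a) / (y - a)) := by ring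
  rw [e1, e2] at this
  linarith

/-- joint antitonicity of concave slopes in pairs of points. -/
lemma concave_slope_pair {f : ℝ → ℝ} {s : Set ℝ} (hf : ConcaveOn ℝ s f)
    {a b a' b' : ℝ} (ha : a ∈ s) (hb : b ∈ s) (ha' : a' ∈ s) (hb' : b' ∈ s)
    (hab : a ≠ b) (hab' : a' ≠ b') (h1 : a ≤ a') (h2 : b ≤ b') :
    (f b' - f a') / (b' - a') ≤ (f b - f a) / (b - a) := by
  by_cases hc : a = b'
  · have hba' : b ≠ a' := fun h => hab (le_antisymm (by rw [h]; exact h1) (by rw [hc]; exact h2))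
    have s2 : (f b' - f a') / (b' - a') ≤ (f b - f a') / (b - a') :=
      concave_secant_anti hf ha' hb hb' hba' (Ne.symm hab') h2
    have s1' : (f a' - f b) / (a' - b) ≤ (f a - f b) / (a - b) :=
      concave_secant_anti hf hb ha ha' hab (Ne.symm hba') h1
    have s1 : (f b - f a') / (b - a') ≤ (f b - f a) / (b - a) := by
      rw [slope_symm (f b) (f a') b a', slope_symm (f b) (f a) b a]; exact s1'
    linarith
  · have s1' : (f a' - f b') / (a' - b') ≤ (f a - f b') / (a - b') :=
      concave_secant_anti hf hb' ha ha' hc hab' h1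
    have s1 : (f b' - f a') / (b' - a') ≤ (f b' - f a) / (b' - a) := by
      rw [slope_symm (f b') (f a') b' a', slope_symm (f b') (f a) b' a]; exact s1'
    have s2 : (f b' - f a) / (b' - a) ≤ (f b - f a) / (b - a) :=
      concave_secant_anti hf ha hb hb' hab.symm (fun h => hc h.symm) h2
    linarith

/-- Core weak-majorization lemma for `∑ log (1 - cᵢ G tᵢ)`. -/
lemma core_lemma (m : ℕ) (G : ℝ → ℝ) (hGanti : AntitoneOn G (Set.Ioi 0))
    (hGconv : ConvexOn ℝ (Set.Ioi 0) G) (hGpos : ∀ t : ℝ, 0 < t → 0 < G t)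
    (c w z : ℕ → ℝ)
    (hc : ∀ i, i < m → 0 < c i)
    (hcm : ∀ i j, i ≤ j → j < m → c j ≤ c i)
    (hlt : ∀ i, i < m → ∀ t : ℝ, 0 < t → c i * G t < 1)
    (hw : ∀ i, i < m → 0 < w i) (hz : ∀ i, i < m → 0 < z i)
    (hwm : ∀ i j, i ≤ j → j < m → w i ≤ w j)
    (hzm : ∀ i j, i ≤ j → j < m → z i ≤ z j)
    (hpre : ∀ k, k ≤ m → ∑ i ∈ range k, w i ≤ ∑ i ∈ range k, z i) :
    ∑ i ∈ range m, Real.log (1 - c i * G (w i)) ≤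
      ∑ i ∈ range m, Real.log (1 - c i * G (z i)) := by
  set f : ℕ → ℝ → ℝ := fun i t => Real.log (1 - c i * G t) with hf
  -- positivity of the factor
  have hpos1 : ∀ i, i < m → ∀ t : ℝ, 0 < t → 0 < 1 - c i * G t := by
    intro i hi t ht; have := hlt i hi t ht; linarith
  -- monotonicity of f i
  have hfmono : ∀ i, i < m → ∀ a b : ℝ, 0 < a → 0 < b → a ≤ b → f i a ≤ f i b := by
    intro i hi a b ha hb hab
    have hG : G b ≤ G a := hGanti ha hb hab
    have h1 : c i * G b ≤ c i * G a := mul_le_mul_of_nonneg_left hG (hc i hi).le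
    exact (Real.log_le_log_iff (hpos1 i hi a ha) (hpos1 i hi b hb)).2 (by linarith)
  -- concavity of f i on Ioi 0
  have hconc : ∀ i, i < m → ConcaveOn ℝ (Set.Ioi 0) (f i) := by
    intro i hi
    refine ⟨convex_Ioi 0, ?_⟩
    intro x hx y hy a b ha hb hab
    have hx' : (0:ℝ) < x := hx
    have hy' : (0:ℝ) < y := hy
    have hmixmem : (0:ℝ) < a • x + b • y := (convex_Ioi (0:ℝ)) hx hy ha hb hab
    have hpx : 0 < 1 - c i * G x := hpos1 i hi x hx'
    have hpy : 0 < 1 - c i * G y := hpos1 i hi y hy'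
    have hGc : G (a • x + b • y) ≤ a * G x + b * G y := by
      have := hGconv.2 hx hy ha hb hab
      simpa [smul_eq_mul] using this
    have hinner : a * (1 - c i * G x) + b * (1 - c i * G y)
        ≤ 1 - c i * G (a • x + b • y) := by
      have h1 : c i * G (a • x + b • y) ≤ c i * (a * G x + b * G y) :=
        mul_le_mul_of_nonneg_left hGc (hc i hi).le
      nlinarith
    have hmixpos : 0 < a * (1 - c i * G x) + b * (1 - c i * G y) := by
      rcases lt_or_eq_of_le ha with ha' | ha'
      · have : 0 ≤ b * (1 - c i * G y) := mul_nonneg hb hpy.le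
        nlinarith
      · have hb1 : b = 1 := by rw [← ha'] at hab; linarith
        rw [← ha', hb1]; simpa using hpy
    have step1 : a * Real.log (1 - c i * G x) + b * Real.log (1 - c i * G y)
        ≤ Real.log (a * (1 - c i * G x) + b * (1 - c i * G y)) := by
      have := strictConcaveOn_log_Ioi.concaveOn.2 (Set.mem_Ioi.2 hpx) (Set.mem_Ioi.2 hpy)
        ha hb hab
      simpa [smul_eq_mul] using this
    have step2 : Real.log (a * (1 - c i * G x) + b * (1 - c i * G y))
        ≤ Real.log (1 - c i * G (a • x + b • y)) :=
      (Real.log_le_log_iff hmixpos (hpos1 i hi _ hmixmem)).2 hinner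
    simp only [hf, smul_eq_mul]
    calc a * Real.log (1 - c i * G x) + b * Real.log (1 - c i * G y)
        ≤ Real.log (a * (1 - c i * G x) + b * (1 - c i * G y)) := step1
      _ ≤ Real.log (1 - c i * G (a * x + b * y)) := by
          simpa [smul_eq_mul] using step2
  -- cross-function slope comparison
  have cross : ∀ j k : ℕ, j ≤ k → k < m → ∀ a b : ℝ, 0 < a → 0 < b → a ≠ b →
      (f k b - f k a) / (b - a) ≤ (f j b - f j a) / (b - a) := by
    have main : ∀ j k : ℕ, j ≤ k → k < m → ∀ a b : ℝ, 0 < a → 0 < b → a < b →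
        (f k b - f k a) / (b - a) ≤ (f j b - f j a) / (b - a) := by
      intro j k hjk hk a b ha hb hab
      have hj : j < m := lt_of_le_of_lt hjk hk
      have hGba : G b ≤ G a := hGanti ha hb hab.le
      have hck : 0 < c k := hc k hk
      have hcj : 0 < c j := hc j hj
      have hkj : c k ≤ c j := hcm j k hjk hk
      have pja : 0 < 1 - c j * G a := hpos1 j hj a ha
      have pjb : 0 < 1 - c j * G b := hpos1 j hj b hb
      have pka : 0 < 1 - c k * G a := hpos1 k hk a ha
      have pkb : 0 < 1 - c k * G b := hpos1 k hk b hb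
      have key : 0 ≤ (c j - c k) * (G a - G b) :=
        mul_nonneg (by linarith) (by linarith)
      have hprod : (1 - c k * G b) * (1 - c j * G a)
          ≤ (1 - c j * G b) * (1 - c k * G a) := by nlinarith
      have l1 : Real.log ((1 - c k * G b) * (1 - c j * G a))
          ≤ Real.log ((1 - c j * G b) * (1 - c k * G a)) :=
        (Real.log_le_log_iff (mul_pos pkb pja) (mul_pos pjb pka)).2 hprod
      rw [Real.log_mul pkb.ne' pja.ne', Real.log_mul pjb.ne' pka.ne'] at l1
      have hnum : f k b - f k a ≤ f j b - f j a := by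
        simp only [hf]; linarith
      gcongr
    intro j k hjk hk a b ha hb hne
    rcases lt_or_gt_of_ne hne with h | h
    · exact main j k hjk hk a b ha hb h
    · rw [slope_symm (f k b) (f k a) b a, slope_symm (f j b) (f j a) b a]
      exact main j k hjk hk b a hb ha h
  -- slopes
  set mu : ℕ → ℝ := fun i => (f i (z i) - f i (w i)) / (z i - w i) with hmu
  have mu_nonneg : ∀ i, i < m → w i ≠ z i → 0 ≤ mu i := by
    intro i hi hne
    rcases lt_or_gt_of_ne hne with h | h
    · exact div_nonneg (sub_nonneg.2 (hfmono i hi _ _ (hw i hi) (hz i hi) h.le))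
        (by linarith)
    · exact div_nonneg_of_nonpos (sub_nonpos.2 (hfmono i hi _ _ (hz i hi) (hw i hi) h.le))
        (by linarith)
  have chain : ∀ j k : ℕ, j ≤ k → k < m → w j ≠ z j → w k ≠ z k → mu k ≤ mu j := by
    intro j k hjk hk hnej hnek
    have hj : j < m := lt_of_le_of_lt hjk hk
    have s1 : mu k ≤ (f j (z k) - f j (w k)) / (z k - w k) :=
      cross j k hjk hk (w k) (z k) (hw k hk) (hz k hk) hnek
    have s2 : (f j (z k) - f j (w k)) / (z k - w k) ≤ mu j :=
      concave_slope_pair (hconc j hj) (Set.mem_Ioi.2 (hw j hj)) (Set.mem_Ioi.2 (hz j hj))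
        (Set.mem_Ioi.2 (hw k hk)) (Set.mem_Ioi.2 (hz k hk)) hnej hnek
        (hwm j k hjk hk) (hzm j k hjk hk)
    linarith
  -- the Abel weights
  set lam : ℕ → ℝ := fun i =>
    (insert (0:ℝ) (((Finset.Ico i m).filter (fun j => w j ≠ z j)).image mu)).max'
      (insert_nonempty _ _) with hlam
  have lam_anti : Antitone lam := by
    intro i i' h
    apply Finset.max'_subset
    exact insert_subset_insert _ (image_subset_image
      (filter_subset_filter _ (Ico_subset_Ico h le_rfl)))
  have lam_nonneg : ∀ i, 0 ≤ lam i := fun i =>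
    le_max' _ _ (mem_insert_self _ _)
  have lam_eq : ∀ i, i < m → w i ≠ z i → lam i = mu i := by
    intro i hi hne
    refine le_antisymm (max'_le _ _ _ ?_) (le_max' _ _ ?_)
    · intro y hy
      rcases mem_insert.1 hy with rfl | hy'
      · exact mu_nonneg i hi hne
      · obtain ⟨j, hj, rfl⟩ := mem_image.1 hy'
        obtain ⟨hj1, hj2⟩ := mem_filter.1 hj
        obtain ⟨hij, hjm⟩ := mem_Ico.1 hj1
        exact chain i j hij hjm hne hj2
    · exact mem_insert_of_mem (mem_image_of_mem mu
        (mem_filter.2 ⟨mem_Ico.2 ⟨le_rfl, hi⟩, hne⟩))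
  have term : ∀ i ∈ range m, f i (z i) - f i (w i) = lam i * (z i - w i) := by
    intro i hi
    rw [mem_range] at hi
    by_cases hne : w i = z i
    · rw [hne]; simp
    · rw [lam_eq i hi hne, hmu]
      simp only
      rw [div_mul_cancel₀]
      exact sub_ne_zero.2 (Ne.symm hne)
  have habel : 0 ≤ ∑ i ∈ range m, lam i * (z i - w i) := by
    refine abel_nonneg m lam _ lam_anti lam_nonneg ?_
    intro k hk
    rw [sum_sub_distrib, sub_nonneg]
    exact hpre k hk
  have hsum : ∑ i ∈ range m, (f i (z i) - f i (w i))
      = ∑ i ∈ range m, lam i * (z i - w i) := sum_congr rfl term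
  have : 0 ≤ ∑ i ∈ range m, (f i (z i) - f i (w i)) := hsum ▸ habel
  rw [sum_sub_distrib] at this
  simp only [hf] at this
  linarith

noncomputable def extNat {n : ℕ} (a : Fin n → ℝ) : ℕ → ℝ :=
  fun j => if h : j < n then a ⟨j, h⟩ else 0

lemma extNat_lt {n : ℕ} (a : Fin n → ℝ) {j : ℕ} (h : j < n) :
    extNat a j = a ⟨j, h⟩ := dif_pos h

lemma range_filter_lt (n k : ℕ) (hk : k ≤ n) :
    (range n).filter (fun j => j < k) = range k := by
  ext j; simp only [mem_filter, mem_range]; omega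

lemma prefixSum_eq_range {n : ℕ} (a : Fin n → ℝ) {k : ℕ} (hk : k ≤ n) :
    prefixSum a k = ∑ j ∈ range k, extNat a j := by
  unfold prefixSum
  rw [sum_filter]
  have h1 : ∀ i : Fin n, (if (i : ℕ) < k then a i else 0)
      = (fun j : ℕ => if j < k then extNat a j else 0) (i : ℕ) := by
    intro i
    simp only [extNat, i.isLt, dif_pos, Fin.eta]
  rw [sum_congr rfl fun i _ => h1 i]
  rw [Fin.sum_univ_eq_sum_range (fun j : ℕ => if j < k then extNat a j else 0) n]
  rw [← sum_filter, range_filter_lt n k hk]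

lemma prefixProd_eq_range {n : ℕ} (a : Fin n → ℝ) {k : ℕ} (hk : k ≤ n) :
    prefixProd a k = ∏ j ∈ range k, (if h : j < n then a ⟨j, h⟩ else 1) := by
  unfold prefixProd
  rw [prod_filter]
  have h1 : ∀ i : Fin n, (if (i : ℕ) < k then a i else 1)
      = (fun j : ℕ => if j < k then (if h : j < n then a ⟨j, h⟩ else 1) else 1) (i : ℕ) := by
    intro i
    simp only [i.isLt, dif_pos, Fin.eta]
  rw [prod_congr rfl fun i _ => h1 i]
  rw [Fin.prod_univ_eq_prod_range
    (fun j : ℕ => if j < k then (if h : j < n then a ⟨j, h⟩ else 1) else 1) n]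
  rw [← prod_filter, range_filter_lt n k hk]

lemma sum_shift_Icc (h : ℕ → ℝ) (k : ℕ) :
    ∑ i ∈ range k, h (i + 1) = ∑ m ∈ Finset.Icc 1 k, h m := by
  induction k with
  | zero => simp
  | succ k ih =>
    have hins : Finset.Icc 1 (k+1) = insert (k+1) (Finset.Icc 1 k) := by
      ext j; simp only [Finset.mem_Icc, Finset.mem_insert]; omega
    rw [sum_range_succ, ih, hins, sum_insert (by simp)]
    ring

lemma Icc_split (h : ℕ → ℝ) {k n : ℕ} (hk : k ≤ n) :
    ∑ m ∈ Finset.Icc 1 n, h m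
      = ∑ m ∈ Finset.Icc 1 k, h m + ∑ m ∈ Finset.Icc (k+1) n, h m := by
  have hsub : Finset.Icc 1 k ⊆ Finset.Icc 1 n := Finset.Icc_subset_Icc le_rfl hk
  have hsd : Finset.Icc 1 n \ Finset.Icc 1 k = Finset.Icc (k+1) n := by
    ext j; simp only [Finset.mem_sdiff, Finset.mem_Icc]; omega
  rw [← Finset.sum_sdiff hsub, hsd]; ring

lemma convexOn_const_rpow {s : ℝ} (hs : 0 < s) :
    ConvexOn ℝ (Set.Ioi 0) (fun a : ℝ => s ^ a) := by
  refine ⟨convex_Ioi 0, ?_⟩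
  intro x _ y _ a b ha hb hab
  simp only [smul_eq_mul]
  rw [Real.rpow_def_of_pos hs, Real.rpow_def_of_pos hs, Real.rpow_def_of_pos hs]
  have h := convexOn_exp.2 (Set.mem_univ (Real.log s * x)) (Set.mem_univ (Real.log s * y))
    ha hb hab
  simp only [smul_eq_mul] at h
  have e : Real.log s * (a * x + b * y) = a * (Real.log s * x) + b * (Real.log s * y) := by
    ring
  rw [e]; exact h

theorem stmt_9 {n : ℕ} (hn : 1 ≤ n) (S g : ℝ → ℝ)
    (hS : ∀ x : ℝ, 0 < S x ∧ S x ≤ 1)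
    (hg : ∀ t > 0, 0 < g t ∧ g t < 1)
    (hg_anti : AntitoneOn g (Set.Ioi 0))
    (hg_conv : ConvexOn ℝ (Set.Ioi 0) g)
    (v u α β : Fin n → ℝ)
    (hv : ∀ i, 0 < v i) (hu : ∀ i, 0 < u i)
    (hα : ∀ i, 0 < α i) (hβ : ∀ i, 0 < β i)
    (hvm : Monotone v) (hum : Monotone u) (hαm : Monotone α) (hβm : Monotone β)
    (hmajα : ∀ k, 1 ≤ k → k ≤ n → prefixSum α k ≤ prefixSum β k)
    (hmajv : ∀ k, 1 ≤ k → k ≤ n → prefixSum v k ≤ prefixSum u k)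
    (q₁ q₂ : ℕ → ℝ)
    (hq₁ : ∀ m ∈ Finset.Icc 1 n, 0 ≤ q₁ m) (hq₂ : ∀ m ∈ Finset.Icc 1 n, 0 ≤ q₂ m)
    (hq₁sum : ∑ m ∈ Finset.Icc 1 n, q₁ m = 1)
    (hq₂sum : ∑ m ∈ Finset.Icc 1 n, q₂ m = 1)
    (hst : ∀ k, 1 ≤ k → k ≤ n →
      ∑ m ∈ Finset.Icc k n, q₂ m ≤ ∑ m ∈ Finset.Icc k n, q₁ m) :
    ∀ x : ℝ,
      ∑ m ∈ Finset.Icc 1 n,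
          q₁ m * prefixProd (fun i => 1 - g (v i) * S x ^ α i) m ≤
        ∑ m ∈ Finset.Icc 1 n,
          q₂ m * prefixProd (fun i => 1 - g (u i) * S x ^ β i) m := by
  intro x
  obtain ⟨hs0, hs1⟩ := hS x
  set s : ℝ := S x with hsdef
  set VV := extNat v with hVV
  set UU := extNat u with hUU
  set AA := extNat α with hAA
  set BB := extNat β with hBB
  have hVVpos : ∀ j, j < n → 0 < VV j := fun j h => by rw [hVV, extNat_lt v h]; exact hv _
  have hUUpos : ∀ j, j < n → 0 < UU j := fun j h => by rw [hUU, extNat_lt u h]; exact hu _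
  have hAApos : ∀ j, j < n → 0 < AA j := fun j h => by rw [hAA, extNat_lt α h]; exact hα _
  have hBBpos : ∀ j, j < n → 0 < BB j := fun j h => by rw [hBB, extNat_lt β h]; exact hβ _
  have hVVm : ∀ j k, j ≤ k → k < n → VV j ≤ VV k := by
    intro j k hjk hk
    rw [hVV, extNat_lt v (lt_of_le_of_lt hjk hk), extNat_lt v hk]
    exact hvm (show (⟨j, lt_of_le_of_lt hjk hk⟩ : Fin n) ≤ ⟨k, hk⟩ from hjk)
  have hUUm : ∀ j k, j ≤ k → k < n → UU j ≤ UU k := by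
    intro j k hjk hk
    rw [hUU, extNat_lt u (lt_of_le_of_lt hjk hk), extNat_lt u hk]
    exact hum (show (⟨j, lt_of_le_of_lt hjk hk⟩ : Fin n) ≤ ⟨k, hk⟩ from hjk)
  have hAAm : ∀ j k, j ≤ k → k < n → AA j ≤ AA k := by
    intro j k hjk hk
    rw [hAA, extNat_lt α (lt_of_le_of_lt hjk hk), extNat_lt α hk]
    exact hαm (show (⟨j, lt_of_le_of_lt hjk hk⟩ : Fin n) ≤ ⟨k, hk⟩ from hjk)
  have hBBm : ∀ j k, j ≤ k → k < n → BB j ≤ BB k := by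
    intro j k hjk hk
    rw [hBB, extNat_lt β (lt_of_le_of_lt hjk hk), extNat_lt β hk]
    exact hβm (show (⟨j, lt_of_le_of_lt hjk hk⟩ : Fin n) ≤ ⟨k, hk⟩ from hjk)
  -- factor bounds
  have factor_pos : ∀ t a : ℝ, 0 < t → 0 < a → 0 < 1 - g t * s ^ a := by
    intro t a ht ha
    have h1 : s ^ a ≤ 1 := Real.rpow_le_one hs0.le hs1 ha.le
    have h2 : g t * s ^ a ≤ g t * 1 := mul_le_mul_of_nonneg_left h1 (hg t ht).1.le
    have h3 := (hg t ht).2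
    linarith
  have factor_lt_one : ∀ t a : ℝ, 0 < t → 0 < a → 1 - g t * s ^ a ≤ 1 := by
    intro t a ht ha
    have := mul_pos (hg t ht).1 (Real.rpow_pos_of_pos hs0 a)
    linarith
  -- Step A : pointwise comparison of the prefix products
  have hA : ∀ m, m ≤ n →
      prefixProd (fun i => 1 - g (v i) * s ^ α i) m ≤
        prefixProd (fun i => 1 - g (u i) * s ^ β i) m := by
    intro m hm
    rw [prefixProd_eq_range _ hm, prefixProd_eq_range _ hm]
    have e1 : ∀ j ∈ range m,
        (if h : j < n then (1 - g (v ⟨j, h⟩) * s ^ α ⟨j, h⟩) else 1)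
          = 1 - g (VV j) * s ^ AA j := by
      intro j hj
      rw [mem_range] at hj
      have hjn : j < n := lt_of_lt_of_le hj hm
      rw [dif_pos hjn, hVV, hAA, extNat_lt v hjn, extNat_lt α hjn]
    have e2 : ∀ j ∈ range m,
        (if h : j < n then (1 - g (u ⟨j, h⟩) * s ^ β ⟨j, h⟩) else 1)
          = 1 - g (UU j) * s ^ BB j := by
      intro j hj
      rw [mem_range] at hj
      have hjn : j < n := lt_of_lt_of_le hj hm
      rw [dif_pos hjn, hUU, hBB, extNat_lt u hjn, extNat_lt β hjn]
    rw [prod_congr rfl e1, prod_congr rfl e2]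
    have hm' : ∀ j, j < m → j < n := fun j h => lt_of_lt_of_le h hm
    -- first application : v → u with exponents α
    have app1 : ∑ j ∈ range m, Real.log (1 - s ^ AA j * g (VV j)) ≤
        ∑ j ∈ range m, Real.log (1 - s ^ AA j * g (UU j)) := by
      refine core_lemma m g hg_anti hg_conv (fun t ht => (hg t ht).1)
        (fun j => s ^ AA j) VV UU
        (fun j hj => Real.rpow_pos_of_pos hs0 _)
        (fun j k hjk hk => Real.rpow_le_rpow_of_exponent_ge hs0 hs1 (hAAm j k hjk (hm' k hk)))
        ?_ (fun j hj => hVVpos j (hm' j hj)) (fun j hj => hUUpos j (hm' j hj))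
        (fun j k hjk hk => hVVm j k hjk (hm' k hk))
        (fun j k hjk hk => hUUm j k hjk (hm' k hk)) ?_
      · intro j hj t ht
        have h1 : s ^ AA j ≤ 1 := Real.rpow_le_one hs0.le hs1 (hAApos j (hm' j hj)).le
        have h2 : s ^ AA j * g t ≤ 1 * g t :=
          mul_le_mul_of_nonneg_right h1 (hg t ht).1.le
        have h3 := (hg t ht).2
        linarith
      · intro k hk
        rcases Nat.eq_zero_or_pos k with rfl | hk1
        · simp
        · have hkn : k ≤ n := le_trans hk hm
          have := hmajv k hk1 hkn
          rwa [prefixSum_eq_range v hkn, prefixSum_eq_range u hkn] at this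
    -- second application : α → β with weights u
    have app2 : ∑ j ∈ range m, Real.log (1 - g (UU j) * s ^ AA j) ≤
        ∑ j ∈ range m, Real.log (1 - g (UU j) * s ^ BB j) := by
      refine core_lemma m (fun a => s ^ a)
        (fun a _ b _ hab => Real.rpow_le_rpow_of_exponent_ge hs0 hs1 hab)
        (convexOn_const_rpow hs0) (fun t _ => Real.rpow_pos_of_pos hs0 t)
        (fun j => g (UU j)) AA BB
        (fun j hj => (hg _ (hUUpos j (hm' j hj))).1)
        (fun j k hjk hk => hg_anti (Set.mem_Ioi.2 (hUUpos j (hm' j (lt_of_le_of_lt hjk hk))))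
          (Set.mem_Ioi.2 (hUUpos k (hm' k hk))) (hUUm j k hjk (hm' k hk)))
        ?_ (fun j hj => hAApos j (hm' j hj)) (fun j hj => hBBpos j (hm' j hj))
        (fun j k hjk hk => hAAm j k hjk (hm' k hk))
        (fun j k hjk hk => hBBm j k hjk (hm' k hk)) ?_
      · intro j hj t ht
        have h1 : s ^ t ≤ 1 := Real.rpow_le_one hs0.le hs1 ht.le
        have h2 : g (UU j) * s ^ t ≤ g (UU j) * 1 :=
          mul_le_mul_of_nonneg_left h1 (hg _ (hUUpos j (hm' j hj))).1.le
        have h3 := (hg _ (hUUpos j (hm' j hj))).2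
        linarith
      · intro k hk
        rcases Nat.eq_zero_or_pos k with rfl | hk1
        · simp
        · have hkn : k ≤ n := le_trans hk hm
          have := hmajα k hk1 hkn
          rwa [prefixSum_eq_range α hkn, prefixSum_eq_range β hkn] at this
    have app1' : ∑ j ∈ range m, Real.log (1 - g (VV j) * s ^ AA j) ≤
        ∑ j ∈ range m, Real.log (1 - g (UU j) * s ^ AA j) := by
      have c1 : ∀ j ∈ range m, Real.log (1 - g (VV j) * s ^ AA j)
          = Real.log (1 - s ^ AA j * g (VV j)) := by
        intro j _; rw [mul_comm]
      have c2 : ∀ j ∈ range m, Real.log (1 - g (UU j) * s ^ AA j)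
          = Real.log (1 - s ^ AA j * g (UU j)) := by
        intro j _; rw [mul_comm]
      rw [sum_congr rfl c1, sum_congr rfl c2]
      exact app1
    -- products are positive
    have hp1 : ∀ j ∈ range m, 0 < 1 - g (VV j) * s ^ AA j := by
      intro j hj; rw [mem_range] at hj
      exact factor_pos _ _ (hVVpos j (hm' j hj)) (hAApos j (hm' j hj))
    have hp2 : ∀ j ∈ range m, 0 < 1 - g (UU j) * s ^ BB j := by
      intro j hj; rw [mem_range] at hj
      exact factor_pos _ _ (hUUpos j (hm' j hj)) (hBBpos j (hm' j hj))
    have hP1 : 0 < ∏ j ∈ range m, (1 - g (VV j) * s ^ AA j) := prod_pos hp1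
    have hP2 : 0 < ∏ j ∈ range m, (1 - g (UU j) * s ^ BB j) := prod_pos hp2
    rw [← Real.log_le_log_iff hP1 hP2,
      Real.log_prod (fun j hj => (hp1 j hj).ne'),
      Real.log_prod (fun j hj => (hp2 j hj).ne')]
    exact le_trans app1' app2
  -- Part B
  have hfac2 : ∀ j, j < n → 0 < 1 - g (UU j) * s ^ BB j ∧ 1 - g (UU j) * s ^ BB j ≤ 1 :=
    fun j hj => ⟨factor_pos _ _ (hUUpos j hj) (hBBpos j hj),
      factor_lt_one _ _ (hUUpos j hj) (hBBpos j hj)⟩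
  have hP2eq : ∀ m, m ≤ n → prefixProd (fun i => 1 - g (u i) * s ^ β i) m
      = ∏ j ∈ range m, (1 - g (UU j) * s ^ BB j) := by
    intro m hm
    rw [prefixProd_eq_range _ hm]
    refine prod_congr rfl fun j hj => ?_
    rw [mem_range] at hj
    have hjn : j < n := lt_of_lt_of_le hj hm
    rw [dif_pos hjn, hUU, hBB, extNat_lt u hjn, extNat_lt β hjn]
  have hP2pos : ∀ m, m ≤ n → 0 < prefixProd (fun i => 1 - g (u i) * s ^ β i) m := by
    intro m hm
    rw [hP2eq m hm]
    exact prod_pos fun j hj => (hfac2 j (lt_of_lt_of_le (mem_range.1 hj) hm)).1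
  have hP2anti : ∀ k l, k ≤ l → l ≤ n →
      prefixProd (fun i => 1 - g (u i) * s ^ β i) l ≤
        prefixProd (fun i => 1 - g (u i) * s ^ β i) k := by
    intro k l hkl hl
    rw [hP2eq k (le_trans hkl hl), hP2eq l hl,
      ← prod_range_mul_prod_Ico (fun j => 1 - g (UU j) * s ^ BB j) hkl]
    have h1 : ∏ j ∈ Finset.Ico k l, (1 - g (UU j) * s ^ BB j) ≤ 1 := by
      refine Finset.prod_le_one ?_ ?_
      · intro j hj
        exact (hfac2 j (lt_of_lt_of_le (mem_Ico.1 hj).2 hl)).1.le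
      · intro j hj
        exact (hfac2 j (lt_of_lt_of_le (mem_Ico.1 hj).2 hl)).2
    have h2 : 0 < ∏ j ∈ range k, (1 - g (UU j) * s ^ BB j) :=
      prod_pos fun j hj => (hfac2 j (lt_of_lt_of_le (mem_range.1 hj) (le_trans hkl hl))).1
    nlinarith
  -- step 1 : replace P₁ by P₂ under q₁
  have step1 : ∑ m ∈ Finset.Icc 1 n, q₁ m * prefixProd (fun i => 1 - g (v i) * s ^ α i) m
      ≤ ∑ m ∈ Finset.Icc 1 n, q₁ m * prefixProd (fun i => 1 - g (u i) * s ^ β i) m := by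
    refine sum_le_sum fun m hm => ?_
    have hmn : m ≤ n := (Finset.mem_Icc.1 hm).2
    exact mul_le_mul_of_nonneg_left (hA m hmn) (hq₁ m hm)
  -- step 2 : Abel summation in the claim-number distribution
  have step2 : ∑ m ∈ Finset.Icc 1 n, q₁ m * prefixProd (fun i => 1 - g (u i) * s ^ β i) m
      ≤ ∑ m ∈ Finset.Icc 1 n, q₂ m * prefixProd (fun i => 1 - g (u i) * s ^ β i) m := by
    set P2 : ℕ → ℝ := fun m => prefixProd (fun i => 1 - g (u i) * s ^ β i) m with hP2
    have habel := abel_nonneg n (fun i => P2 (min (i+1) n)) (fun i => q₂ (i+1) - q₁ (i+1))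
      ?_ ?_ ?_
    · have e0 : ∀ i ∈ range n, P2 (min (i+1) n) * (q₂ (i+1) - q₁ (i+1))
          = (fun m => P2 m * (q₂ m - q₁ m)) (i+1) := by
        intro i hi
        rw [mem_range] at hi
        rw [min_eq_left (by omega)]
      rw [sum_congr rfl e0, sum_shift_Icc (fun m => P2 m * (q₂ m - q₁ m)) n] at habel
      have e1 : ∑ m ∈ Finset.Icc 1 n, P2 m * (q₂ m - q₁ m)
          = ∑ m ∈ Finset.Icc 1 n, q₂ m * P2 m - ∑ m ∈ Finset.Icc 1 n, q₁ m * P2 m := by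
        rw [← sum_sub_distrib]
        exact sum_congr rfl fun m _ => by ring
      rw [e1] at habel
      linarith
    · intro i j hij
      exact hP2anti (min (i+1) n) (min (j+1) n)
        (min_le_min_right n (by omega)) (min_le_right _ _)
    · intro i
      exact (hP2pos _ (min_le_right _ _)).le
    · intro k hk
      have e2 : ∑ i ∈ range k, (q₂ (i+1) - q₁ (i+1))
          = ∑ m ∈ Finset.Icc 1 k, q₂ m - ∑ m ∈ Finset.Icc 1 k, q₁ m := by
        rw [sum_sub_distrib, sum_shift_Icc q₂ k, sum_shift_Icc q₁ k]
      rw [e2]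
      rcases eq_or_lt_of_le hk with rfl | hk'
      · rw [hq₁sum, hq₂sum]; simp
      · have s1 := Icc_split q₁ hk
        have s2 := Icc_split q₂ hk
        rw [hq₁sum] at s1
        rw [hq₂sum] at s2
        have := hst (k+1) (by omega) (by omega)
        linarith
  exact le_trans step1 step2
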